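/- Define E(t,D) := exp(−D·arcsinh(D/t) + t(√(1+D²/t²) − 1)) for reals t, D > 0. There exist constants 0 < c₁ ≤ c₂ < ∞ such that for all reals D, t with 0 < t ≤ D, exp(−c₂ D·max(1, log(D/t))) ≤ E(t,D) ≤ exp(−c₁ D·max(1, log(D/t))); equivalently, c₁ D·max(1, log(D/t)) ≤ D·arcsinh(D/t) − t(√(1+D²/t²) − 1) ≤ c₂ D·max(1, log(D/t)). -/

import Mathlib

private lemma arsinh_eq' (x : ℝ) :
    Real.arsinh x = Real.log (x + Real.sqrt (1 + x ^ 2)) := rfl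

set_option maxHeartbeats 1000000 in
/-- For `E(t,D) = exp(-D·arsinh(D/t) + t(√(1+D²/t²) - 1))` there are
constants `0 < c₁ ≤ c₂ < ∞` such that for all `0 < t ≤ D`,
`exp(-c₂ D max(1, log(D/t))) ≤ E(t,D) ≤ exp(-c₁ D max(1, log(D/t)))`; equivalently,
`c₁ D max(1, log(D/t)) ≤ D·arsinh(D/t) - t(√(1+D²/t²) - 1) ≤ c₂ D max(1, log(D/t))`. -/
theorem stmt11 :
    ∃ c₁ c₂ : ℝ, 0 < c₁ ∧ c₁ ≤ c₂ ∧
      ∀ D t : ℝ, 0 < t → t ≤ D →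
        (c₁ * (D * max 1 (Real.log (D / t))) ≤
            D * Real.arsinh (D / t) - t * (Real.sqrt (1 + D ^ 2 / t ^ 2) - 1) ∧
          D * Real.arsinh (D / t) - t * (Real.sqrt (1 + D ^ 2 / t ^ 2) - 1) ≤
            c₂ * (D * max 1 (Real.log (D / t)))) ∧
        (Real.exp (-(c₂ * (D * max 1 (Real.log (D / t))))) ≤
            Real.exp (-(D * Real.arsinh (D / t)) +
              t * (Real.sqrt (1 + D ^ 2 / t ^ 2) - 1)) ∧
          Real.exp (-(D * Real.arsinh (D / t)) +
              t * (Real.sqrt (1 + D ^ 2 / t ^ 2) - 1)) ≤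
            Real.exp (-(c₁ * (D * max 1 (Real.log (D / t)))))) := by
  refine ⟨1/10, 3, by norm_num, by norm_num, ?_⟩
  intro D t ht htD
  have hD : 0 < D := lt_of_lt_of_le ht htD
  set u : ℝ := D / t with hud
  have hu : 1 ≤ u := (one_le_div ht).2 htD
  have hu0 : 0 < u := lt_of_lt_of_le one_pos hu
  have htu : t * u = D := by rw [hud]; field_simp
  have hsqeq : D ^ 2 / t ^ 2 = u ^ 2 := by rw [hud, div_pow]
  set s : ℝ := Real.sqrt (1 + u ^ 2) with hsdef
  have hs2 : s ^ 2 = 1 + u ^ 2 := Real.sq_sqrt (by positivity)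
  have hs0 : 0 ≤ s := Real.sqrt_nonneg _
  have hsu : u ≤ s := by nlinarith
  have hs1 : 1 ≤ s := by nlinarith
  have hL0 : 0 ≤ Real.log u := Real.log_nonneg hu
  set L : ℝ := Real.log u with hLdef
  set M : ℝ := max 1 L with hMdef
  have hM1 : 1 ≤ M := le_max_left _ _
  have hML : L ≤ M := le_max_right _ _
  have hMle : M ≤ 1 + L := max_le (by linarith) (by linarith)
  -- log u ≥ 1 - 1/u, i.e. u * L ≥ u - 1
  have hlog_lb : u - 1 ≤ u * L := by
    have h := Real.log_le_sub_one_of_pos (x := 1/u) (by positivity)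
    rw [Real.log_div one_ne_zero (ne_of_gt hu0), Real.log_one] at h
    have h2 : (0 - L) * u ≤ (1/u - 1) * u := by
      apply mul_le_mul_of_nonneg_right (by linarith) (le_of_lt hu0)
    have h3 : (1/u) * u = 1 := one_div_mul_cancel (ne_of_gt hu0)
    nlinarith [h2, h3]
  have hlog2 : (0.6931471803 : ℝ) < Real.log 2 := Real.log_two_gt_d9
  have hlog3 : Real.log 3 ≤ 2 := by
    have h := Real.log_le_sub_one_of_pos (x := 3) (by norm_num)
    linarith
  -- arsinh bounds
  have harsinh : Real.arsinh u = Real.log (u + s) := arsinh_eq' u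
  have h_ars_lb : Real.log 2 + L ≤ Real.arsinh u := by
    rw [harsinh]
    have h2u : Real.log 2 + L = Real.log (2 * u) := by
      rw [Real.log_mul two_ne_zero (ne_of_gt hu0)]
    rw [h2u]
    exact Real.log_le_log (by positivity) (by linarith)
  have h_ars_ub : Real.arsinh u ≤ Real.log 3 + L := by
    rw [harsinh]
    have h3u : Real.log 3 + L = Real.log (3 * u) := by
      rw [Real.log_mul three_ne_zero (ne_of_gt hu0)]
    rw [h3u]
    apply Real.log_le_log (by positivity)
    have : s ≤ 2 * u := by nlinarith
    linarith
  -- bound on the subtracted term: 0 ≤ t*(s-1) ≤ D * (u/(u+1))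
  have hsub_nonneg : 0 ≤ t * (s - 1) := by nlinarith
  have hsub_ub : t * (s - 1) ≤ D * (u / (u + 1)) := by
    have h1 : s - 1 ≤ u ^ 2 / (u + 1) := by
      rw [le_div_iff₀ (by linarith : (0:ℝ) < u + 1)]
      nlinarith [mul_nonneg (by linarith : (0:ℝ) ≤ s - u) (by linarith : (0:ℝ) ≤ s - 1)]
    have h2 : t * (s - 1) ≤ t * (u ^ 2 / (u + 1)) := by
      apply mul_le_mul_of_nonneg_left h1 (le_of_lt ht)
    have h3 : t * (u ^ 2 / (u + 1)) = D * (u / (u + 1)) := by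
      rw [← htu]; ring
    linarith [h2, h3.le]
  -- key lower estimate
  have hfrac : u / (u + 1) ≤ Real.log 2 + L - (1/10) * (1 + L) := by
    rw [div_le_iff₀ (by linarith : (0:ℝ) < u + 1)]
    have hp : (0.6931471803 : ℝ) * (u + 1) ≤ Real.log 2 * (u + 1) :=
      mul_le_mul_of_nonneg_right hlog2.le (by linarith)
    linarith [hlog_lb, hp, hL0]
  have hF : D * Real.arsinh u - t * (s - 1) =
      D * Real.arsinh (D / t) - t * (Real.sqrt (1 + D ^ 2 / t ^ 2) - 1) := by
    rw [hsqeq]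
  have hmain_lb : (1/10) * (D * M) ≤
      D * Real.arsinh (D / t) - t * (Real.sqrt (1 + D ^ 2 / t ^ 2) - 1) := by
    rw [← hF]
    have h1 : (1/10) * (D * M) ≤ (1/10) * (D * (1 + L)) := by
      apply mul_le_mul_of_nonneg_left _ (by norm_num)
      exact mul_le_mul_of_nonneg_left hMle (le_of_lt hD)
    have h2 : D * (u / (u + 1)) ≤ D * (Real.log 2 + L - (1/10) * (1 + L)) :=
      mul_le_mul_of_nonneg_left hfrac (le_of_lt hD)
    have h3 : D * (Real.log 2 + L) ≤ D * Real.arsinh u :=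
      mul_le_mul_of_nonneg_left h_ars_lb (le_of_lt hD)
    have h4 : D * (Real.log 2 + L - (1/10) * (1 + L)) =
        D * (Real.log 2 + L) - (1/10) * (D * (1 + L)) := by ring
    linarith [hsub_ub]
  have hmain_ub : D * Real.arsinh (D / t) - t * (Real.sqrt (1 + D ^ 2 / t ^ 2) - 1) ≤
      3 * (D * M) := by
    rw [← hF]
    have h1 : Real.arsinh u ≤ 3 * M := by
      have : Real.arsinh u ≤ 2 + L := by linarith
      linarith
    have h2 : D * Real.arsinh u ≤ D * (3 * M) :=
      mul_le_mul_of_nonneg_left h1 (le_of_lt hD)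
    have h3 : D * (3 * M) = 3 * (D * M) := by ring
    linarith
  refine ⟨⟨hmain_lb, hmain_ub⟩, ?_, ?_⟩
  · apply Real.exp_le_exp.2; linarith
  · apply Real.exp_le_exp.2; linarith
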